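/- Let R be a commutative ring graded by an abelian group K, and let K' ⊆ K be a subgroup such that K = K' ⊕ K'' splits. Suppose t ∈ R is a homogeneous element whose image in the Veronese subalgebra R_{K''} := ⊕_{w ∈ K''} R_w is K''-prime, and suppose every K-homogeneous element of R can be written as a homogeneous unit times an element of R_{K''}. Then t is K-prime in R. -/

import Mathlib

/-- Let `R` be `K`-graded with `K = K' ⊕ K''`. If a homogeneous element `t` of
degree in `K''` is `K''`-prime in the Veronese subalgebra `R_{K''}`, and every
homogeneous element of `R` can be moved into `R_{K''}` by a homogeneous unit,
then `t` is `K`-prime in `R`. -/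
theorem veronese_prime_implies_K_prime
    {R : Type*} [CommRing R]
    {K : Type*} [AddCommGroup K] [DecidableEq K]
    (𝒜 : K → AddSubgroup R) [GradedRing 𝒜]
    (K' K'' : AddSubgroup K) (hcompl : IsCompl K' K'')
    (t : R) (wt : K) (ht : t ∈ 𝒜 wt) (hwt : wt ∈ K'')
    (ht0 : t ≠ 0) (htu : ¬ IsUnit t)
    (hprime'' : ∀ (g h : R) (wg wh : K), wg ∈ K'' → wh ∈ K'' →
      g ∈ 𝒜 wg → h ∈ 𝒜 wh →
      (∃ (c : R) (wc : K), wc ∈ K'' ∧ c ∈ 𝒜 wc ∧ g * h = t * c) →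
      (∃ (c : R) (wc : K), wc ∈ K'' ∧ c ∈ 𝒜 wc ∧ g = t * c) ∨
        (∃ (c : R) (wc : K), wc ∈ K'' ∧ c ∈ 𝒜 wc ∧ h = t * c))
    (hunits : ∀ w : K, ∃ (u : R) (wu : K), IsUnit u ∧ u ∈ 𝒜 wu ∧ w + wu ∈ K'') :
    ∀ g h : R, SetLike.IsHomogeneousElem 𝒜 g → SetLike.IsHomogeneousElem 𝒜 h →
      t ∣ g * h → t ∣ g ∨ t ∣ h := by
  rintro g h ⟨wg, hg⟩ ⟨wh, hh⟩ ⟨a, ha⟩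
  obtain ⟨u, wu, hu, hum, hgu⟩ := hunits wg
  obtain ⟨v, wv, hv, hvm, hhv⟩ := hunits wh
  -- degrees
  have hgu' : g * u ∈ 𝒜 (wg + wu) := SetLike.mul_mem_graded hg hum
  have hhv' : h * v ∈ 𝒜 (wh + wv) := SetLike.mul_mem_graded hh hvm
  set D : K := (wg + wu) + (wh + wv) with hD
  have hDmem : D ∈ K'' := K''.add_mem hgu hhv
  set wc : K := D - wt with hwc
  have hwcmem : wc ∈ K'' := K''.sub_mem hDmem hwt
  set x : R := a * (u * v) with hx
  have hprod : (g * u) * (h * v) = t * x := by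
    rw [hx]; linear_combination (u * v) * ha
  have hprodmem : (g * u) * (h * v) ∈ 𝒜 D := SetLike.mul_mem_graded hgu' hhv'
  have hkey : t * (DirectSum.decompose 𝒜 x wc : R) = (g * u) * (h * v) := by
    have h1 : (DirectSum.decompose 𝒜 (t * x) (wt + wc) : R)
        = t * DirectSum.decompose 𝒜 x wc :=
      DirectSum.coe_decompose_mul_add_of_left_mem 𝒜 ht
    have h2 : wt + wc = D := by rw [hwc]; abel
    rw [h2] at h1
    rw [← h1, ← hprod, DirectSum.decompose_of_mem_same 𝒜 (hprod ▸ hprodmem)]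
  have := hprime'' (g * u) (h * v) (wg + wu) (wh + wv) hgu hhv hgu' hhv'
    ⟨(DirectSum.decompose 𝒜 x wc : R), wc, hwcmem,
      (DirectSum.decompose 𝒜 x wc).2, hkey.symm⟩
  rcases this with ⟨c, wcc, _, _, hc⟩ | ⟨c, wcc, _, _, hc⟩
  · exact Or.inl (hu.dvd_mul_right.mp ⟨c, hc⟩)
  · exact Or.inr (hv.dvd_mul_right.mp ⟨c, hc⟩)
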